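/- If x* ∈ X is an AS-stationary point of (SPO) and x* is AS-regular, then x* is an S-stationary point of (SPO). -/

import Mathlib

open Filter Topology

noncomputable section

/-- Euclidean n-space. -/
abbrev E (n : ℕ) : Type := EuclideanSpace ℝ (Fin n)

/-- The SP-Lagrangian L(x, λ, μ) = f(x) + λᵀg(x) + μᵀh(x). -/
def LSP {n m q : ℕ} (f : E n → ℝ) (g : Fin m → E n → ℝ) (h : Fin q → E n → ℝ)
    (lam : Fin m → ℝ) (mu : Fin q → ℝ) (x : E n) : ℝ :=
  f x + (∑ i, lam i * g i x) + (∑ j, mu j * h j x)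

/-- S-stationarity of x* for (SPO). -/
def SStat {n m q : ℕ} (f : E n → ℝ) (g : Fin m → E n → ℝ) (h : Fin q → E n → ℝ)
    (xstar : E n) : Prop :=
  ∃ (lam : Fin m → ℝ) (mu : Fin q → ℝ),
    (∀ i, 0 ≤ lam i) ∧ (∀ i, lam i * g i xstar = 0) ∧
    ∀ i, xstar i ≠ 0 → gradient (LSP f g h lam mu) xstar i = 0

/-- AS-stationarity (approximate S-stationarity) of x* for (SPO). -/
def ASStat {n m q : ℕ} (f : E n → ℝ) (g : Fin m → E n → ℝ) (h : Fin q → E n → ℝ)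
    (xstar : E n) : Prop :=
  ∃ (xk : ℕ → E n) (lamk : ℕ → Fin m → ℝ) (muk : ℕ → Fin q → ℝ),
    Tendsto xk atTop (𝓝 xstar) ∧
    (∀ k i, 0 ≤ lamk k i) ∧
    (∀ i, xstar i ≠ 0 →
      Tendsto (fun k => gradient (LSP f g h (lamk k) (muk k)) (xk k) i) atTop (𝓝 0)) ∧
    (∀ i, Tendsto (fun k => min (-(g i (xk k))) (lamk k i)) atTop (𝓝 0))

/-- The cone K(x) (relative to the fixed point x*). -/
def Kcone {n m q : ℕ} (g : Fin m → E n → ℝ) (h : Fin q → E n → ℝ)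
    (xstar : E n) (x : E n) : Set (E n) :=
  {d | ∃ (mu : Fin q → ℝ) (lam : Fin m → ℝ),
    (∀ i, 0 ≤ lam i) ∧ (∀ i, g i xstar ≠ 0 → lam i = 0) ∧
    ∀ j, xstar j ≠ 0 →
      d j = (∑ i, mu i * gradient (h i) x j) + ∑ i, lam i * gradient (g i) x j}

/-- AS-regularity: outer semicontinuity of K(·) at x*. -/
def ASRegular {n m q : ℕ} (g : Fin m → E n → ℝ) (h : Fin q → E n → ℝ)
    (xstar : E n) : Prop :=
  ∀ (xk dk : ℕ → E n) (d : E n),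
    Tendsto xk atTop (𝓝 xstar) → Tendsto dk atTop (𝓝 d) →
    (∀ k, dk k ∈ Kcone g h xstar (xk k)) → d ∈ Kcone g h xstar xstar

lemma grad_apply {n : ℕ} (φ : E n → ℝ) (x : E n) (j : Fin n) :
    gradient φ x j = fderiv ℝ φ x (EuclideanSpace.single j 1) := by
  have h1 : (inner ℝ (gradient φ x) (EuclideanSpace.single j (1:ℝ)) : ℝ)
      = fderiv ℝ φ x (EuclideanSpace.single j 1) := by
    rw [gradient]; exact InnerProductSpace.toDual_symm_apply
  rw [← h1, EuclideanSpace.inner_single_right]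
  simp

lemma grad_LSP {n m q : ℕ} {f : E n → ℝ} {g : Fin m → E n → ℝ} {h : Fin q → E n → ℝ}
    (hf : ContDiff ℝ 1 f) (hg : ∀ i, ContDiff ℝ 1 (g i)) (hh : ∀ j, ContDiff ℝ 1 (h j))
    (lam : Fin m → ℝ) (mu : Fin q → ℝ) (x : E n) (j : Fin n) :
    gradient (LSP f g h lam mu) x j
      = gradient f x j + (∑ i, lam i * gradient (g i) x j)
        + ∑ i, mu i * gradient (h i) x j := by
  have hF : HasFDerivAt (LSP f g h lam mu)
      (fderiv ℝ f x + (∑ i, lam i • fderiv ℝ (g i) x) + ∑ i, mu i • fderiv ℝ (h i) x) x := by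
    exact ((hf.differentiable one_ne_zero x).hasFDerivAt.add
      (HasFDerivAt.fun_sum fun i _ =>
        (((hg i).differentiable one_ne_zero x).hasFDerivAt).const_mul (lam i))).add
      (HasFDerivAt.fun_sum fun i _ =>
        (((hh i).differentiable one_ne_zero x).hasFDerivAt).const_mul (mu i))
  simp only [grad_apply, hF.fderiv, ContinuousLinearMap.add_apply,
    ContinuousLinearMap.coe_sum', Finset.sum_apply, ContinuousLinearMap.smul_apply,
    smul_eq_mul]

lemma grad_cont {n : ℕ} {φ : E n → ℝ} (hφ : ContDiff ℝ 1 φ) (j : Fin n) :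
    Continuous (fun x => gradient φ x j) := by
  have h1 : Continuous (fun x => gradient φ x) := by
    have : (fun x => gradient φ x) =
        (fun L => (InnerProductSpace.toDual ℝ (E n)).symm L) ∘ (fderiv ℝ φ) := rfl
    rw [this]
    exact (InnerProductSpace.toDual ℝ (E n)).symm.continuous.comp
      (hφ.continuous_fderiv one_ne_zero)
  exact (EuclideanSpace.proj j).continuous.comp h1

/-- AS-stationary + AS-regular implies S-stationary. -/
theorem stmt_10 {n m q : ℕ} (hn : 1 ≤ n) {ρ : ℝ} (hρ : 0 < ρ)
    (f : E n → ℝ) (g : Fin m → E n → ℝ) (h : Fin q → E n → ℝ)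
    (hf : ContDiff ℝ 1 f) (hg : ∀ i, ContDiff ℝ 1 (g i)) (hh : ∀ j, ContDiff ℝ 1 (h j))
    (xstar : E n)
    -- x* ∈ X :
    (hgx : ∀ i, g i xstar ≤ 0) (hhx : ∀ j, h j xstar = 0) (hxnn : ∀ i, 0 ≤ xstar i)
    (hAS : ASStat f g h xstar)
    (hreg : ASRegular g h xstar) :
    SStat f g h xstar := by
  obtain ⟨xk, lamk, muk, hxk, hlnn, hgrad, hmin⟩ := hAS
  -- multipliers of inactive constraints tend to 0
  have hlam0 : ∀ i, g i xstar ≠ 0 → Tendsto (fun k => lamk k i) atTop (𝓝 0) := by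
    intro i hgi
    have hc : 0 < -(g i xstar) := by
      rcases lt_or_eq_of_le (hgx i) with hlt | heq
      · linarith
      · exact absurd heq hgi
    have hgc : Tendsto (fun k => -(g i (xk k))) atTop (𝓝 (-(g i xstar))) :=
      (((hg i).continuous.tendsto xstar).comp hxk).neg
    have hev1 : ∀ᶠ k in atTop, -(g i xstar) / 2 < -(g i (xk k)) :=
      hgc.eventually (eventually_gt_nhds (by linarith))
    have hev2 : ∀ᶠ k in atTop,
        min (-(g i (xk k))) (lamk k i) < -(g i xstar) / 2 :=
      (hmin i).eventually (eventually_lt_nhds (by linarith))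
    refine (hmin i).congr' ?_
    filter_upwards [hev1, hev2] with k h1 h2
    rcases min_cases (-(g i (xk k))) (lamk k i) with ⟨he, _⟩ | ⟨he, _⟩
    · exfalso; rw [he] at h2; linarith
    · exact he
  -- modified multipliers
  set lamt : ℕ → Fin m → ℝ := fun k i => if g i xstar = 0 then lamk k i else 0 with hlamt
  -- the direction sequence
  set e : E n ≃L[ℝ] (Fin n → ℝ) := PiLp.continuousLinearEquiv 2 ℝ (fun _ : Fin n => ℝ)
    with he
  set F : ℕ → Fin n → ℝ := fun k j => if xstar j = 0 then 0 else
      (∑ i, muk k i * gradient (h i) (xk k) j) + ∑ i, lamt k i * gradient (g i) (xk k) j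
    with hF
  set d0 : Fin n → ℝ := fun j => if xstar j = 0 then 0 else -(gradient f xstar j) with hd0
  have happ : ∀ (v : Fin n → ℝ) (j : Fin n), (e.symm v) j = v j := fun _ _ => rfl
  -- componentwise convergence
  have hcomp : ∀ j, Tendsto (fun k => F k j) atTop (𝓝 (d0 j)) := by
    intro j
    by_cases hj : xstar j = 0
    · simp only [hF, hd0, if_pos hj]; exact tendsto_const_nhds
    · simp only [hF, hd0, if_neg hj]
      -- F k j = gradLSP(lamk,muk) - grad f - correction
      have hrw : ∀ k, (∑ i, muk k i * gradient (h i) (xk k) j)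
          + ∑ i, lamt k i * gradient (g i) (xk k) j
          = gradient (LSP f g h (lamk k) (muk k)) (xk k) j
            - gradient f (xk k) j
            - ∑ i, (if g i xstar = 0 then 0 else lamk k i) * gradient (g i) (xk k) j := by
        intro k
        rw [grad_LSP hf hg hh]
        have : (∑ i, lamt k i * gradient (g i) (xk k) j)
            + ∑ i, (if g i xstar = 0 then 0 else lamk k i) * gradient (g i) (xk k) j
            = ∑ i, lamk k i * gradient (g i) (xk k) j := by
          rw [← Finset.sum_add_distrib]
          refine Finset.sum_congr rfl fun i _ => ?_
          by_cases hgi : g i xstar = 0 <;> simp [hlamt, hgi]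
        linarith [this]
      have hA : Tendsto (fun k => gradient (LSP f g h (lamk k) (muk k)) (xk k) j)
          atTop (𝓝 0) := hgrad j hj
      have hB : Tendsto (fun k => gradient f (xk k) j) atTop (𝓝 (gradient f xstar j)) :=
        ((grad_cont hf j).tendsto xstar).comp hxk
      have hC : Tendsto (fun k =>
          ∑ i, (if g i xstar = 0 then 0 else lamk k i) * gradient (g i) (xk k) j)
          atTop (𝓝 0) := by
        have : Tendsto (fun k =>
            ∑ i, (if g i xstar = 0 then 0 else lamk k i) * gradient (g i) (xk k) j)
            atTop (𝓝 (∑ i : Fin m, 0)) := by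
          refine tendsto_finset_sum _ fun i _ => ?_
          by_cases hgi : g i xstar = 0
          · simp [hgi]
          · simp only [if_neg hgi]
            have := (hlam0 i hgi).mul
              (((grad_cont (hg i) j).tendsto xstar).comp hxk)
            rwa [zero_mul] at this
        simpa using this
      have := (hA.sub hB).sub hC
      rw [zero_sub, sub_zero] at this
      exact this.congr fun k => (hrw k).symm
  have hdk : Tendsto (fun k => e.symm (F k)) atTop (𝓝 (e.symm d0)) :=
    (e.symm.continuous.tendsto d0).comp (tendsto_pi_nhds.mpr hcomp)
  have hmem : ∀ k, e.symm (F k) ∈ Kcone g h xstar (xk k) := by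
    intro k
    refine ⟨muk k, lamt k, fun i => ?_, fun i hgi => by simp [hlamt, hgi], fun j hj => ?_⟩
    · by_cases hgi : g i xstar = 0 <;> simp [hlamt, hgi, hlnn k i]
    · rw [happ]; simp only [hF, if_neg hj]
  obtain ⟨mu, lam, hlnn', hl0, hd⟩ := hreg xk (fun k => e.symm (F k)) (e.symm d0) hxk hdk hmem
  refine ⟨lam, mu, hlnn', fun i => ?_, fun j hj => ?_⟩
  · by_cases hgi : g i xstar = 0
    · rw [hgi, mul_zero]
    · rw [hl0 i hgi, zero_mul]
  · have h1 := hd j hj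
    rw [happ] at h1
    simp only [hd0, if_neg hj] at h1
    rw [grad_LSP hf hg hh]
    linarith [h1]
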